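/- Let A₁ ⊂ V₁ and A₂ ⊂ V₂ be central arrangements in spaces of positive dimension. For θ ∈ D^(i)(A₁) (acting in the x-variables), η ∈ D^(j)(A₂) (acting in the y-variables), the product θη lies in D^(i+j)(A₁ × A₂); consequently S·D^(i)(A₁)·D^(j)(A₂) ⊆ D^(i+j)(A₁ × A₂). -/

import Mathlib

open MvPolynomial

/-- The operator `∂^a = ∂_1^{a_1} ⋯ ∂_ℓ^{a_ℓ}` on `S = K[x_1,…,x_ℓ]`. -/
noncomputable def pdOp (K : Type) [CommRing K] {ℓ : ℕ} (a : Fin ℓ →₀ ℕ) :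
    Module.End K (MvPolynomial (Fin ℓ) K) :=
  (List.ofFn fun i : Fin ℓ =>
    ((pderiv i : Derivation K (MvPolynomial (Fin ℓ) K) (MvPolynomial (Fin ℓ) K)).toLinearMap) ^ (a i)).prod

/-- Multiplication by a polynomial, as a `K`-endomorphism of `S`. -/
noncomputable def mulOp (K : Type) [CommRing K] {ℓ : ℕ} (p : MvPolynomial (Fin ℓ) K) :
    Module.End K (MvPolynomial (Fin ℓ) K) :=
  LinearMap.mulLeft K p

/-- total degree `|a|` of a multi-index. -/
def mdeg {ℓ : ℕ} (a : Fin ℓ →₀ ℕ) : ℕ := a.sum fun _ n => n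

/-- `a! = a_1! ⋯ a_ℓ!`. -/
def mfact {ℓ : ℕ} (a : Fin ℓ →₀ ℕ) : ℕ := a.prod fun _ n => n.factorial

/-- The operator `Σ_a c_a ∂^a` from a finitely supported coefficient family. -/
noncomputable def sumOp (K : Type) [CommRing K] {ℓ : ℕ}
    (c : (Fin ℓ →₀ ℕ) →₀ MvPolynomial (Fin ℓ) K) :
    Module.End K (MvPolynomial (Fin ℓ) K) :=
  c.sum fun a p => p • pdOp K a

/-- `D^{(m)}(S) = ⊕_{|a|=m} S ∂^a`, as an `S`-submodule of `End_K(S)`. -/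
noncomputable def Dfull (K : Type) [CommRing K] {ℓ : ℕ} (m : ℕ) :
    Submodule (MvPolynomial (Fin ℓ) K) (Module.End K (MvPolynomial (Fin ℓ) K)) :=
  Submodule.span _ {θ | ∃ a : Fin ℓ →₀ ℕ, mdeg a = m ∧ θ = pdOp K a}

/-- Operators preserving the principal ideal `Q·S`. -/
noncomputable def stabMod (K : Type) [CommRing K] {ℓ : ℕ} (Q : MvPolynomial (Fin ℓ) K) :
    Submodule (MvPolynomial (Fin ℓ) K) (Module.End K (MvPolynomial (Fin ℓ) K)) where
  carrier := {θ | ∀ f, θ (Q * f) ∈ Ideal.span {Q}}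
  add_mem' := by
    intro θ η hθ hη f
    simpa using add_mem (hθ f) (hη f)
  zero_mem' := by intro f; simp
  smul_mem' := by
    intro p θ hθ f
    simpa [LinearMap.smul_apply, smul_eq_mul] using Ideal.mul_mem_left _ p (hθ f)

/-- `D^{(m)}` of (the ideal generated by) `Q`:
operators of order `m` preserving `Q·S`. For an arrangement with defining polynomial `Q`
this is `D^{(m)}(𝒜)`. -/
noncomputable def Dmod (K : Type) [CommRing K] {ℓ : ℕ} (m : ℕ) (Q : MvPolynomial (Fin ℓ) K) :
    Submodule (MvPolynomial (Fin ℓ) K) (Module.End K (MvPolynomial (Fin ℓ) K)) :=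
  Dfull K m ⊓ stabMod K Q

/-- `θ` is a homogeneous operator of order `m` and degree `d`. -/
def IsHomOp (K : Type) [CommRing K] {ℓ : ℕ} (m d : ℕ)
    (θ : Module.End K (MvPolynomial (Fin ℓ) K)) : Prop :=
  ∃ c : (Fin ℓ →₀ ℕ) →₀ MvPolynomial (Fin ℓ) K,
    (∀ a ∈ c.support, mdeg a = m) ∧ (∀ a, (c a).IsHomogeneous d) ∧ θ = sumOp K c

/-- A central hyperplane arrangement in `K^ℓ`, given by its (pairwise coprime,
nonzero, homogeneous of degree one) defining linear forms. -/
structure Arrangement (K : Type) [Field K] (ℓ : ℕ) where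
  forms : Finset (MvPolynomial (Fin ℓ) K)
  hom : ∀ α ∈ forms, α.IsHomogeneous 1
  ne_zero : ∀ α ∈ forms, α ≠ 0
  coprime : ∀ α ∈ forms, ∀ β ∈ forms, α ≠ β → IsCoprime α β

/-- The defining polynomial `Q = ∏_{H ∈ 𝒜} α_H`. -/
noncomputable def Arrangement.defQ {K : Type} [Field K] {ℓ : ℕ} (A : Arrangement K ℓ) :
    MvPolynomial (Fin ℓ) K :=
  ∏ α ∈ A.forms, α

/-- The coefficient matrix `M_m(θ_1,…,θ_s)` with entry `θ_j(x^{a(i)})/a(i)!`,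
for a chosen ordering `e` of the degree-`m` multi-indices. -/
noncomputable def coeffMat (K : Type) [Field K] {ℓ s : ℕ}
    (θ : Fin s → Module.End K (MvPolynomial (Fin ℓ) K))
    (e : Fin s → (Fin ℓ →₀ ℕ)) : Matrix (Fin s) (Fin s) (MvPolynomial (Fin ℓ) K) :=
  fun i j => C ((mfact (e i) : K)⁻¹) * (θ j (monomial (e i) 1))


/-- Lift a multi-index on the first `ℓ₁` (`x`-)variables to `ℓ₁ + ℓ₂` variables. -/
noncomputable def liftIdx₁ {ℓ₁ ℓ₂ : ℕ} (a : Fin ℓ₁ →₀ ℕ) : Fin (ℓ₁ + ℓ₂) →₀ ℕ :=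
  a.embDomain (Fin.castAddEmb ℓ₂)

/-- Lift a multi-index on the last `ℓ₂` (`y`-)variables to `ℓ₁ + ℓ₂` variables. -/
noncomputable def liftIdx₂ {ℓ₁ ℓ₂ : ℕ} (b : Fin ℓ₂ →₀ ℕ) : Fin (ℓ₁ + ℓ₂) →₀ ℕ :=
  b.embDomain (Fin.natAddEmb ℓ₁)

/-- Lift a polynomial in the `x`-variables to `S = S₁ ⊗ S₂`. -/
noncomputable def liftPoly₁ (K : Type) [CommRing K] {ℓ₁ ℓ₂ : ℕ}
    (p : MvPolynomial (Fin ℓ₁) K) : MvPolynomial (Fin (ℓ₁ + ℓ₂)) K :=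
  rename (Fin.castAdd ℓ₂) p

/-- Lift a polynomial in the `y`-variables to `S = S₁ ⊗ S₂`. -/
noncomputable def liftPoly₂ (K : Type) [CommRing K] {ℓ₁ ℓ₂ : ℕ}
    (q : MvPolynomial (Fin ℓ₂) K) : MvPolynomial (Fin (ℓ₁ + ℓ₂)) K :=
  rename (Fin.natAdd ℓ₁) q

/-- The product `θη ∈ End_K(S)` of the operators `θ = Σ_a c₁(a) ∂_x^a` on `S₁` and
`η = Σ_b c₂(b) ∂_y^b` on `S₂`, acting on `S = S₁ ⊗ S₂`. -/
noncomputable def mixOp (K : Type) [CommRing K] {ℓ₁ ℓ₂ : ℕ}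
    (c₁ : (Fin ℓ₁ →₀ ℕ) →₀ MvPolynomial (Fin ℓ₁) K)
    (c₂ : (Fin ℓ₂ →₀ ℕ) →₀ MvPolynomial (Fin ℓ₂) K) :
    Module.End K (MvPolynomial (Fin (ℓ₁ + ℓ₂)) K) :=
  c₁.sum fun a p => c₂.sum fun b q =>
    (liftPoly₁ K p * liftPoly₂ K q) • pdOp K (liftIdx₁ a + liftIdx₂ b)

/-- The `S`-submodule `S·T₁·T₂ ⊆ End_K(S)` generated by products `θη` of operators
of order `i` in the `x`-variables lying in `T₁` with operators of order `j` in the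
`y`-variables lying in `T₂`. -/
noncomputable def SDDmod (K : Type) [CommRing K] {ℓ₁ ℓ₂ : ℕ} (i j : ℕ)
    (T₁ : Set (Module.End K (MvPolynomial (Fin ℓ₁) K)))
    (T₂ : Set (Module.End K (MvPolynomial (Fin ℓ₂) K))) :
    Submodule (MvPolynomial (Fin (ℓ₁ + ℓ₂)) K)
      (Module.End K (MvPolynomial (Fin (ℓ₁ + ℓ₂)) K)) :=
  Submodule.span _
    {Θ | ∃ (c₁ : (Fin ℓ₁ →₀ ℕ) →₀ MvPolynomial (Fin ℓ₁) K)
           (c₂ : (Fin ℓ₂ →₀ ℕ) →₀ MvPolynomial (Fin ℓ₂) K),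
      (∀ a ∈ c₁.support, mdeg a = i) ∧ (∀ b ∈ c₂.support, mdeg b = j) ∧
      sumOp K c₁ ∈ T₁ ∧ sumOp K c₂ ∈ T₂ ∧ Θ = mixOp K c₁ c₂}

/-- Defining polynomial of the product arrangement `𝒜₁ × 𝒜₂`. -/
noncomputable def prodQ (K : Type) [Field K] {ℓ₁ ℓ₂ : ℕ}
    (A₁ : Arrangement K ℓ₁) (A₂ : Arrangement K ℓ₂) : MvPolynomial (Fin (ℓ₁ + ℓ₂)) K :=
  liftPoly₁ K A₁.defQ * liftPoly₂ K A₂.defQ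



/- ### Auxiliary lemmas ### -/


-- pderivs commute
lemma pderiv_pderiv_comm {K : Type} [CommRing K] {σ : Type*} (i j : σ)
    (p : MvPolynomial σ K) :
    pderiv i (pderiv j p) = pderiv j (pderiv i p) := by
  classical
  induction p using MvPolynomial.induction_on' with
  | monomial u a =>
      rcases eq_or_ne i j with rfl | hij
      · rfl
      · simp only [pderiv_monomial]
        rw [Finsupp.tsub_apply, Finsupp.tsub_apply, Finsupp.single_eq_of_ne hij,
          Finsupp.single_eq_of_ne (Ne.symm hij), tsub_zero, tsub_zero, tsub_right_comm]
        ring_nf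
  | add p q hp hq => simp [hp, hq]

lemma commute_pderiv {K : Type} [CommRing K] {σ : Type*} (i j : σ) :
    Commute ((pderiv i : Derivation K (MvPolynomial σ K) _).toLinearMap)
      ((pderiv j : Derivation K (MvPolynomial σ K) _).toLinearMap) := by
  apply LinearMap.ext
  intro p
  exact pderiv_pderiv_comm i j p

-- product of ofFn of commuting powers is additive in exponents
lemma ofFn_prod_pow_add {M : Type*} [Monoid M] :
    ∀ {n : ℕ} (D : Fin n → M), (∀ i j, Commute (D i) (D j)) →
      ∀ u v : Fin n → ℕ,
      (List.ofFn fun i => D i ^ (u i + v i)).prod =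
        (List.ofFn fun i => D i ^ u i).prod * (List.ofFn fun i => D i ^ v i).prod := by
  intro n
  induction n with
  | zero => intro D _ u v; simp
  | succ n ih =>
      intro D hD u v
      have hcomm : Commute (D 0 ^ v 0)
          ((List.ofFn fun i : Fin n => D i.succ ^ u i.succ).prod) := by
        apply Commute.list_prod_right
        intro x hx
        rw [List.mem_ofFn] at hx
        obtain ⟨k, rfl⟩ := hx
        exact (hD 0 k.succ).pow_pow _ _
      simp only [List.ofFn_succ, List.prod_cons]
      rw [ih (fun i => D i.succ) (fun i j => hD _ _) (fun i => u i.succ) (fun i => v i.succ),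
        pow_add]
      rw [mul_assoc, mul_assoc, ← mul_assoc (D 0 ^ v 0), hcomm.eq, mul_assoc]

section Aux
variable (K : Type) [CommRing K] {ℓ ℓ₁ ℓ₂ : ℕ}

lemma pdOp_add (u v : Fin ℓ →₀ ℕ) : pdOp K (u + v) = pdOp K u * pdOp K v := by
  unfold pdOp
  have := ofFn_prod_pow_add
    (fun i : Fin ℓ => ((pderiv i : Derivation K (MvPolynomial (Fin ℓ) K) _).toLinearMap))
    (fun i j => commute_pderiv i j) u v
  simpa [Finsupp.add_apply] using this

lemma liftIdx₁_castAdd (a : Fin ℓ₁ →₀ ℕ) (k : Fin ℓ₁) :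
    (liftIdx₁ (ℓ₂ := ℓ₂) a) (Fin.castAdd ℓ₂ k) = a k :=
  Finsupp.embDomain_apply_self _ a k

lemma liftIdx₁_natAdd (a : Fin ℓ₁ →₀ ℕ) (k : Fin ℓ₂) :
    (liftIdx₁ (ℓ₂ := ℓ₂) a) (Fin.natAdd ℓ₁ k) = 0 := by
  apply Finsupp.embDomain_notin_range
  rintro ⟨j, hj⟩
  have : (j : ℕ) = ℓ₁ + k := congrArg Fin.val hj
  omega

lemma liftIdx₂_castAdd (b : Fin ℓ₂ →₀ ℕ) (k : Fin ℓ₁) :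
    (liftIdx₂ (ℓ₁ := ℓ₁) b) (Fin.castAdd ℓ₂ k) = 0 := by
  apply Finsupp.embDomain_notin_range
  rintro ⟨j, hj⟩
  have : (ℓ₁ + j : ℕ) = (k : ℕ) := congrArg Fin.val hj
  have := k.isLt
  omega

lemma liftIdx₂_natAdd (b : Fin ℓ₂ →₀ ℕ) (k : Fin ℓ₂) :
    (liftIdx₂ (ℓ₁ := ℓ₁) b) (Fin.natAdd ℓ₁ k) = b k :=
  Finsupp.embDomain_apply_self _ b k

lemma mdeg_add (u v : Fin ℓ →₀ ℕ) : mdeg (u + v) = mdeg u + mdeg v := by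
  unfold mdeg
  exact Finsupp.sum_add_index' (fun _ => rfl) (fun _ _ _ => rfl)

lemma mdeg_liftIdx₁ (a : Fin ℓ₁ →₀ ℕ) : mdeg (liftIdx₁ (ℓ₂ := ℓ₂) a) = mdeg a := by
  unfold mdeg liftIdx₁
  exact Finsupp.sum_embDomain

lemma mdeg_liftIdx₂ (b : Fin ℓ₂ →₀ ℕ) : mdeg (liftIdx₂ (ℓ₁ := ℓ₁) b) = mdeg b := by
  unfold mdeg liftIdx₂
  exact Finsupp.sum_embDomain

lemma pderiv_natAdd_liftPoly₁ (k : Fin ℓ₂) (p : MvPolynomial (Fin ℓ₁) K) :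
    pderiv (Fin.natAdd ℓ₁ k) (liftPoly₁ K (ℓ₂ := ℓ₂) p) = 0 := by
  apply pderiv_eq_zero_of_notMem_vars
  intro h
  obtain ⟨j, _, hj⟩ := mem_vars_rename _ _ h
  have : (j : ℕ) = ℓ₁ + k := congrArg Fin.val hj
  omega

lemma pderiv_castAdd_liftPoly₂ (k : Fin ℓ₁) (q : MvPolynomial (Fin ℓ₂) K) :
    pderiv (Fin.castAdd ℓ₂ k) (liftPoly₂ K (ℓ₁ := ℓ₁) q) = 0 := by
  apply pderiv_eq_zero_of_notMem_vars
  intro h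
  obtain ⟨j, _, hj⟩ := mem_vars_rename _ _ h
  have : (ℓ₁ + j : ℕ) = (k : ℕ) := congrArg Fin.val hj
  have := k.isLt
  omega

end Aux

section Aux2
set_option maxHeartbeats 1000000
variable (K : Type) [CommRing K] {ℓ ℓ₁ ℓ₂ : ℕ}

-- generic intertwining along ofFn products
lemma ofFn_prod_intertwine {R : Type*} [CommSemiring R] {M N : Type*}
    [AddCommMonoid M] [AddCommMonoid N] [Module R M] [Module R N] :
    ∀ {n : ℕ} (D : Fin n → Module.End R M) (d : Fin n → Module.End R N)
      (φ : N →ₗ[R] M), (∀ k, (D k) ∘ₗ φ = φ ∘ₗ d k) →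
      (List.ofFn D).prod ∘ₗ φ = φ ∘ₗ (List.ofFn d).prod := by
  intro n
  induction n with
  | zero => intro D d φ h; simp [Module.End.one_eq_id]
  | succ n ih =>
      intro D d φ h
      simp only [List.ofFn_succ, List.prod_cons]
      have hrest := ih (fun i => D i.succ) (fun i => d i.succ) φ (fun i => h i.succ)
      calc (D 0 * (List.ofFn fun i : Fin n => D i.succ).prod) ∘ₗ φ
          = D 0 ∘ₗ ((List.ofFn fun i : Fin n => D i.succ).prod ∘ₗ φ) := by
            rw [Module.End.mul_eq_comp, LinearMap.comp_assoc]
        _ = D 0 ∘ₗ (φ ∘ₗ (List.ofFn fun i : Fin n => d i.succ).prod) := by rw [hrest]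
        _ = (D 0 ∘ₗ φ) ∘ₗ (List.ofFn fun i : Fin n => d i.succ).prod := by
            rw [LinearMap.comp_assoc]
        _ = (φ ∘ₗ d 0) ∘ₗ (List.ofFn fun i : Fin n => d i.succ).prod := by rw [h 0]
        _ = φ ∘ₗ (d 0 * (List.ofFn fun i : Fin n => d i.succ).prod) := by
            rw [Module.End.mul_eq_comp, LinearMap.comp_assoc]

lemma pow_intertwine {R : Type*} [CommSemiring R] {M N : Type*}
    [AddCommMonoid M] [AddCommMonoid N] [Module R M] [Module R N]
    (A : Module.End R M) (a : Module.End R N) (φ : N →ₗ[R] M)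
    (h : A ∘ₗ φ = φ ∘ₗ a) (n : ℕ) : (A ^ n) ∘ₗ φ = φ ∘ₗ (a ^ n) := by
  induction n with
  | zero => simp [Module.End.one_eq_id]
  | succ n ih =>
      rw [pow_succ', pow_succ', Module.End.mul_eq_comp, Module.End.mul_eq_comp,
        LinearMap.comp_assoc, ih, ← LinearMap.comp_assoc, h, LinearMap.comp_assoc]

/-- `liftPoly₂` as a linear map. -/
noncomputable def liftL₂ : MvPolynomial (Fin ℓ₂) K →ₗ[K] MvPolynomial (Fin (ℓ₁ + ℓ₂)) K :=
  (rename (Fin.natAdd ℓ₁) : MvPolynomial (Fin ℓ₂) K →ₐ[K] _).toLinearMap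

noncomputable def liftL₁ : MvPolynomial (Fin ℓ₁) K →ₗ[K] MvPolynomial (Fin (ℓ₁ + ℓ₂)) K :=
  (rename (Fin.castAdd ℓ₂) : MvPolynomial (Fin ℓ₁) K →ₐ[K] _).toLinearMap

lemma pdOp_liftIdx₂_comp (b : Fin ℓ₂ →₀ ℕ) :
    pdOp K (liftIdx₂ (ℓ₁ := ℓ₁) b) ∘ₗ liftL₂ K = liftL₂ K ∘ₗ pdOp K b := by
  unfold pdOp
  rw [List.ofFn_add, List.prod_append]
  have h1 : (List.ofFn fun k : Fin ℓ₁ =>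
      ((pderiv (Fin.castAdd ℓ₂ k) : Derivation K (MvPolynomial (Fin (ℓ₁+ℓ₂)) K) _).toLinearMap)
        ^ ((liftIdx₂ (ℓ₁ := ℓ₁) b) (Fin.castAdd ℓ₂ k))).prod = 1 := by
    apply List.prod_eq_one
    intro x hx
    rw [List.mem_ofFn] at hx
    obtain ⟨k, rfl⟩ := hx
    show _ ^ ((liftIdx₂ (ℓ₁ := ℓ₁) b) (Fin.castAdd ℓ₂ k)) = 1
    rw [liftIdx₂_castAdd, pow_zero]
  erw [h1, one_mul]
  apply ofFn_prod_intertwine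
  intro k
  show (((pderiv (Fin.natAdd ℓ₁ k) : Derivation K (MvPolynomial (Fin (ℓ₁+ℓ₂)) K) _).toLinearMap)
      ^ ((liftIdx₂ (ℓ₁ := ℓ₁) b) (Fin.natAdd ℓ₁ k))) ∘ₗ liftL₂ K
    = liftL₂ K ∘ₗ ((pderiv k : Derivation K (MvPolynomial (Fin ℓ₂) K) _).toLinearMap) ^ (b k)
  rw [liftIdx₂_natAdd]
  apply pow_intertwine
  apply LinearMap.ext
  intro q
  simp only [LinearMap.comp_apply]
  exact pderiv_rename ((Fin.natAddEmb ℓ₁).injective) k q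

lemma pdOp_liftIdx₁_comp (a : Fin ℓ₁ →₀ ℕ) :
    pdOp K (liftIdx₁ (ℓ₂ := ℓ₂) a) ∘ₗ liftL₁ K = liftL₁ K ∘ₗ pdOp K a := by
  unfold pdOp
  rw [List.ofFn_add, List.prod_append]
  have h2 : (List.ofFn fun k : Fin ℓ₂ =>
      ((pderiv (Fin.natAdd ℓ₁ k) : Derivation K (MvPolynomial (Fin (ℓ₁+ℓ₂)) K) _).toLinearMap)
        ^ ((liftIdx₁ (ℓ₂ := ℓ₂) a) (Fin.natAdd ℓ₁ k))).prod = 1 := by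
    apply List.prod_eq_one
    intro x hx
    rw [List.mem_ofFn] at hx
    obtain ⟨k, rfl⟩ := hx
    show _ ^ ((liftIdx₁ (ℓ₂ := ℓ₂) a) (Fin.natAdd ℓ₁ k)) = 1
    rw [liftIdx₁_natAdd, pow_zero]
  rw [h2, mul_one]
  apply ofFn_prod_intertwine
  intro k
  show (((pderiv (Fin.castAdd ℓ₂ k) : Derivation K (MvPolynomial (Fin (ℓ₁+ℓ₂)) K) _).toLinearMap)
      ^ ((liftIdx₁ (ℓ₂ := ℓ₂) a) (Fin.castAdd ℓ₂ k))) ∘ₗ liftL₁ K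
    = liftL₁ K ∘ₗ ((pderiv k : Derivation K (MvPolynomial (Fin ℓ₁) K) _).toLinearMap) ^ (a k)
  rw [liftIdx₁_castAdd]
  apply pow_intertwine
  apply LinearMap.ext
  intro q
  simp only [LinearMap.comp_apply]
  exact pderiv_rename (Fin.castAdd_injective ℓ₁ ℓ₂) k q

end Aux2

section Aux3
set_option maxHeartbeats 1600000
variable (K : Type) [CommRing K] {ℓ ℓ₁ ℓ₂ : ℕ}

lemma smul_end_eq (p : MvPolynomial (Fin ℓ) K)
    (A : Module.End K (MvPolynomial (Fin ℓ) K)) :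
    p • A = mulOp K p * A := by
  apply LinearMap.ext
  intro f
  simp [mulOp, Module.End.mul_apply]

lemma mulOp_mul (p q : MvPolynomial (Fin ℓ) K) :
    mulOp K (p * q) = mulOp K p * mulOp K q := by
  apply LinearMap.ext
  intro f
  simp [mulOp, Module.End.mul_apply, mul_assoc]

lemma commute_mulOp_mulOp (p q : MvPolynomial (Fin ℓ) K) :
    Commute (mulOp K p) (mulOp K q) := by
  show mulOp K p * mulOp K q = mulOp K q * mulOp K p
  rw [← mulOp_mul, ← mulOp_mul, mul_comm]

lemma commute_mulOp_pderiv (g : MvPolynomial (Fin ℓ) K) (i : Fin ℓ)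
    (h : pderiv i g = 0) :
    Commute (mulOp K g) ((pderiv i : Derivation K (MvPolynomial (Fin ℓ) K) _).toLinearMap) := by
  apply LinearMap.ext
  intro f
  simp only [Module.End.mul_apply, mulOp, LinearMap.mulLeft_apply]
  show g * pderiv i f = pderiv i (g * f)
  rw [pderiv_mul, h, zero_mul, zero_add]

lemma commute_mulOp_pdOp (g : MvPolynomial (Fin ℓ) K) (u : Fin ℓ →₀ ℕ)
    (h : ∀ i, u i = 0 ∨ pderiv i g = 0) :
    Commute (mulOp K g) (pdOp K u) := by
  unfold pdOp
  apply Commute.list_prod_right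
  intro x hx
  rw [List.mem_ofFn] at hx
  obtain ⟨i, rfl⟩ := hx
  show Commute _ (((pderiv i : Derivation K (MvPolynomial (Fin ℓ) K) _).toLinearMap) ^ (u i))
  rcases h i with h0 | hz
  · rw [h0, pow_zero]
    exact Commute.one_right _
  · exact (commute_mulOp_pderiv K g i hz).pow_right _

lemma commute_mulOp₁_pdOp₂ (p : MvPolynomial (Fin ℓ₁) K) (b : Fin ℓ₂ →₀ ℕ) :
    Commute (mulOp K (liftPoly₁ K (ℓ₂ := ℓ₂) p)) (pdOp K (liftIdx₂ b)) := by
  apply commute_mulOp_pdOp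
  intro i
  refine Fin.addCases (fun k => ?_) (fun k => ?_) i
  · exact Or.inl (liftIdx₂_castAdd b k)
  · exact Or.inr (pderiv_natAdd_liftPoly₁ K k p)

lemma commute_mulOp₂_pdOp₁ (q : MvPolynomial (Fin ℓ₂) K) (a : Fin ℓ₁ →₀ ℕ) :
    Commute (mulOp K (liftPoly₂ K (ℓ₁ := ℓ₁) q)) (pdOp K (liftIdx₁ a)) := by
  apply commute_mulOp_pdOp
  intro i
  refine Fin.addCases (fun k => ?_) (fun k => ?_) i
  · exact Or.inr (pderiv_castAdd_liftPoly₂ K k q)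
  · exact Or.inl (liftIdx₁_natAdd a k)

/-- The lift of `Σ c₁(a) ∂_x^a` to an operator on `S`. -/
noncomputable def opL₁ (c₁ : (Fin ℓ₁ →₀ ℕ) →₀ MvPolynomial (Fin ℓ₁) K) :
    Module.End K (MvPolynomial (Fin (ℓ₁ + ℓ₂)) K) :=
  c₁.sum fun a p => (liftPoly₁ K (ℓ₂ := ℓ₂) p) • pdOp K (liftIdx₁ (ℓ₂ := ℓ₂) a)

noncomputable def opL₂ (c₂ : (Fin ℓ₂ →₀ ℕ) →₀ MvPolynomial (Fin ℓ₂) K) :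
    Module.End K (MvPolynomial (Fin (ℓ₁ + ℓ₂)) K) :=
  c₂.sum fun b q => (liftPoly₂ K (ℓ₁ := ℓ₁) q) • pdOp K (liftIdx₂ (ℓ₁ := ℓ₁) b)

lemma mixOp_eq (c₁ : (Fin ℓ₁ →₀ ℕ) →₀ MvPolynomial (Fin ℓ₁) K)
    (c₂ : (Fin ℓ₂ →₀ ℕ) →₀ MvPolynomial (Fin ℓ₂) K) :
    mixOp K c₁ c₂ = opL₁ K (ℓ₂ := ℓ₂) c₁ * opL₂ K (ℓ₁ := ℓ₁) c₂ := by
  simp only [mixOp, opL₁, opL₂, Finsupp.sum, Finset.sum_mul_sum]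
  refine Finset.sum_congr rfl fun a _ => Finset.sum_congr rfl fun b _ => ?_
  rw [pdOp_add, smul_end_eq, smul_end_eq, smul_end_eq, mulOp_mul,
    (commute_mulOp₂_pdOp₁ K (c₂ b) a).symm.mul_mul_mul_comm]

lemma commute_mulOp₂_opL₁ (q : MvPolynomial (Fin ℓ₂) K)
    (c₁ : (Fin ℓ₁ →₀ ℕ) →₀ MvPolynomial (Fin ℓ₁) K) :
    Commute (mulOp K (liftPoly₂ K q)) (opL₁ K (ℓ₂ := ℓ₂) c₁) := by
  simp only [opL₁, Finsupp.sum]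
  apply Commute.sum_right
  intro a _
  rw [smul_end_eq]
  exact (commute_mulOp_mulOp K _ _).mul_right (commute_mulOp₂_pdOp₁ K q a)

lemma commute_mulOp₁_opL₂ (p : MvPolynomial (Fin ℓ₁) K)
    (c₂ : (Fin ℓ₂ →₀ ℕ) →₀ MvPolynomial (Fin ℓ₂) K) :
    Commute (mulOp K (liftPoly₁ K p)) (opL₂ K (ℓ₁ := ℓ₁) c₂) := by
  simp only [opL₂, Finsupp.sum]
  apply Commute.sum_right
  intro b _
  rw [smul_end_eq]
  exact (commute_mulOp_mulOp K _ _).mul_right (commute_mulOp₁_pdOp₂ K p b)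

lemma opL₂_lift_apply (c₂ : (Fin ℓ₂ →₀ ℕ) →₀ MvPolynomial (Fin ℓ₂) K)
    (r : MvPolynomial (Fin ℓ₂) K) :
    opL₂ K (ℓ₁ := ℓ₁) c₂ (liftPoly₂ K r) = liftPoly₂ K (sumOp K c₂ r) := by
  simp only [opL₂, sumOp, Finsupp.sum, LinearMap.coe_sum, Finset.sum_apply, liftPoly₂,
    map_sum]
  refine Finset.sum_congr rfl fun b _ => ?_
  rw [LinearMap.smul_apply, smul_eq_mul, LinearMap.smul_apply, smul_eq_mul]
  have h := congrFun (congrArg (fun (f : _ →ₗ[K] _) => (f : _ → _))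
    (pdOp_liftIdx₂_comp K (ℓ₁ := ℓ₁) b)) r
  simp only [LinearMap.comp_apply] at h
  have h' : pdOp K (liftIdx₂ (ℓ₁ := ℓ₁) b)
      (rename (Fin.natAdd ℓ₁) r) = rename (Fin.natAdd ℓ₁) (pdOp K b r) := h
  rw [h', ← map_mul]

lemma opL₁_lift_apply (c₁ : (Fin ℓ₁ →₀ ℕ) →₀ MvPolynomial (Fin ℓ₁) K)
    (r : MvPolynomial (Fin ℓ₁) K) :
    opL₁ K (ℓ₂ := ℓ₂) c₁ (liftPoly₁ K r) = liftPoly₁ K (sumOp K c₁ r) := by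
  simp only [opL₁, sumOp, Finsupp.sum, LinearMap.coe_sum, Finset.sum_apply, liftPoly₁,
    map_sum]
  refine Finset.sum_congr rfl fun a _ => ?_
  rw [LinearMap.smul_apply, smul_eq_mul, LinearMap.smul_apply, smul_eq_mul]
  have h := congrFun (congrArg (fun (f : _ →ₗ[K] _) => (f : _ → _))
    (pdOp_liftIdx₁_comp K (ℓ₂ := ℓ₂) a)) r
  simp only [LinearMap.comp_apply] at h
  have h' : pdOp K (liftIdx₁ (ℓ₂ := ℓ₂) a)
      (rename (Fin.castAdd ℓ₂) r) = rename (Fin.castAdd ℓ₂) (pdOp K a r) := h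
  rw [h', ← map_mul]

end Aux3

section Main
set_option maxHeartbeats 1600000

variable (K : Type) [CommRing K] {ℓ₁ ℓ₂ : ℕ}

lemma mem_span_liftProducts (f : MvPolynomial (Fin (ℓ₁ + ℓ₂)) K) :
    f ∈ Submodule.span K {g : MvPolynomial (Fin (ℓ₁ + ℓ₂)) K |
      ∃ p q, g = liftPoly₁ K p * liftPoly₂ K q} := by
  refine MvPolynomial.induction_on f ?_ ?_ ?_
  · intro a
    exact Submodule.subset_span ⟨C a, 1, by simp [liftPoly₁, liftPoly₂]⟩
  · intro p q hp hq
    exact Submodule.add_mem _ hp hq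
  · intro p i hp
    induction i using Fin.addCases with
    | left k =>
        refine Submodule.span_induction ?_ ?_ ?_ ?_ hp
        · rintro x ⟨p', q', rfl⟩
          refine Submodule.subset_span ⟨p' * X k, q', ?_⟩
          simp only [liftPoly₁, liftPoly₂, map_mul, rename_X]
          ring
        · simp
        · intro x y _ _ hx hy
          rw [add_mul]
          exact Submodule.add_mem _ hx hy
        · intro a x _ hx
          rw [smul_mul_assoc]
          exact Submodule.smul_mem _ _ hx
    | right k =>
        refine Submodule.span_induction ?_ ?_ ?_ ?_ hp
        · rintro x ⟨p', q', rfl⟩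
          refine Submodule.subset_span ⟨p', q' * X k, ?_⟩
          simp only [liftPoly₁, liftPoly₂, map_mul, rename_X]
          ring
        · simp
        · intro x y _ _ hx hy
          rw [add_mul]
          exact Submodule.add_mem _ hx hy
        · intro a x _ hx
          rw [smul_mul_assoc]
          exact Submodule.smul_mem _ _ hx

end Main

set_option maxHeartbeats 3200000


/-- If `θ ∈ D^{(i)}(𝒜₁)` and `η ∈ D^{(j)}(𝒜₂)` then `θη ∈ D^{(i+j)}(𝒜₁ × 𝒜₂)`;
consequently `S·D^{(i)}(𝒜₁)·D^{(j)}(𝒜₂) ⊆ D^{(i+j)}(𝒜₁ × 𝒜₂)`. -/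
theorem prod_op_mem (K : Type) [Field K] [CharZero K] {ℓ₁ ℓ₂ : ℕ}
    (hℓ₁ : 0 < ℓ₁) (hℓ₂ : 0 < ℓ₂)
    (A₁ : Arrangement K ℓ₁) (A₂ : Arrangement K ℓ₂) (i j : ℕ) :
    (∀ (c₁ : (Fin ℓ₁ →₀ ℕ) →₀ MvPolynomial (Fin ℓ₁) K)
       (c₂ : (Fin ℓ₂ →₀ ℕ) →₀ MvPolynomial (Fin ℓ₂) K),
      (∀ a ∈ c₁.support, mdeg a = i) → (∀ b ∈ c₂.support, mdeg b = j) →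
      sumOp K c₁ ∈ Dmod K i A₁.defQ → sumOp K c₂ ∈ Dmod K j A₂.defQ →
      mixOp K c₁ c₂ ∈ Dmod K (i + j) (prodQ K A₁ A₂)) ∧
    SDDmod K i j (Dmod K i A₁.defQ : Set _) (Dmod K j A₂.defQ : Set _) ≤
      Dmod K (i + j) (prodQ K A₁ A₂) := by
  have main : ∀ (c₁ : (Fin ℓ₁ →₀ ℕ) →₀ MvPolynomial (Fin ℓ₁) K)
      (c₂ : (Fin ℓ₂ →₀ ℕ) →₀ MvPolynomial (Fin ℓ₂) K),
      (∀ a ∈ c₁.support, mdeg a = i) → (∀ b ∈ c₂.support, mdeg b = j) →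
      sumOp K c₁ ∈ Dmod K i A₁.defQ → sumOp K c₂ ∈ Dmod K j A₂.defQ →
      mixOp K c₁ c₂ ∈ Dmod K (i + j) (prodQ K A₁ A₂) := by
    intro c₁ c₂ hs₁ hs₂ h₁ h₂
    have hst₁ : ∀ f, sumOp K c₁ (A₁.defQ * f) ∈ Ideal.span {A₁.defQ} :=
      (Submodule.mem_inf.mp h₁).2
    have hst₂ : ∀ f, sumOp K c₂ (A₂.defQ * f) ∈ Ideal.span {A₂.defQ} :=
      (Submodule.mem_inf.mp h₂).2
    refine Submodule.mem_inf.mpr ⟨?_, ?_⟩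
    · -- order part : membership in `Dfull K (i+j)`
      show mixOp K c₁ c₂ ∈ Dfull K (i + j)
      rw [mixOp]
      apply Submodule.sum_mem
      intro a ha
      apply Submodule.sum_mem
      intro b hb
      apply Submodule.smul_mem
      apply Submodule.subset_span
      exact ⟨liftIdx₁ a + liftIdx₂ b,
        by rw [mdeg_add, mdeg_liftIdx₁, mdeg_liftIdx₂, hs₁ a ha, hs₂ b hb], rfl⟩
    · -- stability part
      show ∀ f, mixOp K c₁ c₂ (prodQ K A₁ A₂ * f) ∈ Ideal.span {prodQ K A₁ A₂}
      intro f
      have hf := mem_span_liftProducts K f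
      have hle : Submodule.span K {g : MvPolynomial (Fin (ℓ₁ + ℓ₂)) K |
            ∃ p q, g = liftPoly₁ K p * liftPoly₂ K q} ≤
          Submodule.comap
            ((mixOp K c₁ c₂) ∘ₗ (LinearMap.mulLeft K (prodQ K A₁ A₂)))
            ((Ideal.span {prodQ K A₁ A₂}).restrictScalars K) := by
        rw [Submodule.span_le]
        rintro x ⟨p, q, rfl⟩
        rw [SetLike.mem_coe, Submodule.mem_comap]
        simp only [LinearMap.comp_apply, LinearMap.mulLeft_apply,
          Submodule.restrictScalars_mem]
        obtain ⟨g₁, hg₁⟩ := Ideal.mem_span_singleton.mp (hst₁ p)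
        obtain ⟨g₂, hg₂⟩ := Ideal.mem_span_singleton.mp (hst₂ q)
        have harg : prodQ K A₁ A₂ * (liftPoly₁ K p * liftPoly₂ K q) =
            liftPoly₁ K (A₁.defQ * p) * liftPoly₂ K (A₂.defQ * q) := by
          simp only [prodQ, liftPoly₁, liftPoly₂, map_mul]
          ring
        rw [mixOp_eq, Module.End.mul_apply, harg]
        have e₂ : opL₂ K (ℓ₁ := ℓ₁) c₂
              (liftPoly₁ K (A₁.defQ * p) * liftPoly₂ K (A₂.defQ * q)) =
            liftPoly₁ K (A₁.defQ * p) *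
              (opL₂ K (ℓ₁ := ℓ₁) c₂ (liftPoly₂ K (A₂.defQ * q))) := by
          have hc := LinearMap.congr_fun
            ((commute_mulOp₁_opL₂ K (A₁.defQ * p) c₂).eq)
            (liftPoly₂ K (A₂.defQ * q))
          simpa [Module.End.mul_apply, mulOp] using hc.symm
        rw [e₂, opL₂_lift_apply, hg₂]
        have e₁ : opL₁ K (ℓ₂ := ℓ₂) c₁
              (liftPoly₁ K (A₁.defQ * p) * liftPoly₂ K (A₂.defQ * g₂)) =
            liftPoly₂ K (A₂.defQ * g₂) *
              (opL₁ K (ℓ₂ := ℓ₂) c₁ (liftPoly₁ K (A₁.defQ * p))) := by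
          have hc := LinearMap.congr_fun
            ((commute_mulOp₂_opL₁ K (A₂.defQ * g₂) c₁).eq)
            (liftPoly₁ K (A₁.defQ * p))
          rw [mul_comm]
          simpa [Module.End.mul_apply, mulOp] using hc.symm
        have harg2 : liftPoly₂ K (ℓ₁ := ℓ₁) (A₂.defQ * g₂) = liftPoly₂ K (A₂.defQ * g₂) := rfl
        rw [show liftPoly₁ K (A₁.defQ * p) * liftPoly₂ K (ℓ₁ := ℓ₁) (A₂.defQ * g₂) =
            liftPoly₁ K (A₁.defQ * p) * liftPoly₂ K (A₂.defQ * g₂) from rfl]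
        rw [e₁, opL₁_lift_apply, hg₁]
        refine Ideal.mem_span_singleton.mpr ⟨liftPoly₂ K g₂ * liftPoly₁ K g₁, ?_⟩
        simp only [prodQ, liftPoly₁, liftPoly₂, map_mul]
        ring
      have := hle hf
      simpa only [Submodule.mem_comap, LinearMap.comp_apply, LinearMap.mulLeft_apply,
        Submodule.restrictScalars_mem] using this
  refine ⟨main, ?_⟩
  rw [SDDmod, Submodule.span_le]
  rintro Θ ⟨c₁, c₂, hs₁, hs₂, h₁, h₂, rfl⟩
  exact main c₁ c₂ hs₁ hs₂ h₁ h₂
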